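/- Dependence of the minimal divergence on constant shifts of the forcing: Let σ be an anisotropy on ℝⁿ, let ψ be a Lipschitz function on the torus 𝕋ⁿ = ℝⁿ/ℤⁿ with CH(ψ;𝕋ⁿ) ≠ ∅, and let f ∈ L²(𝕋ⁿ). Then for every constant c ∈ ℝ, Λ_{f+c}[ψ] = Λ_f[ψ] − c a.e. on {ψ = 0}. -/

import Mathlib

open MeasureTheory Set Filter Metric
open scoped RealInnerProductSpace ENNReal Topology NNReal

noncomputable section

namespace Paper

abbrev E (n : ℕ) := EuclideanSpace ℝ (Fin n)

def subdiff {k : ℕ} (ρ : E k → ℝ) (p : E k) : Set (E k) :=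
  {z | ∀ q, ρ p + ⟪z, q - p⟫ ≤ ρ q}

def PosHom {k : ℕ} (ρ : E k → ℝ) : Prop :=
  ∀ c : ℝ, 0 < c → ∀ x, ρ (c • x) = c * ρ x

structure IsAnisotropy {k : ℕ} (ρ : E k → ℝ) : Prop where
  convex : ConvexOn ℝ Set.univ ρ
  homog : PosHom ρ
  bounded : Bornology.IsBounded {x | ρ x < 1}
  zero_mem : ρ 0 < 1

/-- `ℤⁿ`-periodicity: a function of `x ∈ ℝⁿ` that models a function on the torus
`𝕋ⁿ = ℝⁿ/ℤⁿ`. -/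
def ZPeriodic {n : ℕ} {α : Type*} (ψ : E n → α) : Prop :=
  ∀ (x : E n) (k : Fin n → ℤ), ψ (x + (WithLp.equiv 2 (Fin n → ℝ)).symm fun i => (k i : ℝ)) = ψ x

/-- The fundamental cube `[0,1)ⁿ` of the torus. -/
def cube (n : ℕ) : Set (E n) := {x | ∀ i, x i ∈ Set.Ico (0:ℝ) 1}

/-- Cahn-Hoffman vector field on the torus, with distributional divergence `w`. -/
def IsTorusCH {n : ℕ} (σ : E n → ℝ) (ψ : E n → ℝ) (z : E n → E n) (w : E n → ℝ) : Prop :=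
  ZPeriodic z ∧ ZPeriodic w ∧
  MemLp z ⊤ (volume.restrict (cube n)) ∧
  MemLp w 2 (volume.restrict (cube n)) ∧
  (∀ φ : E n → ℝ, ContDiff ℝ 1 φ → ZPeriodic φ →
    ∫ x in cube n, w x * φ x = - ∫ x in cube n, ⟪z x, gradient φ x⟫) ∧
  (∀ᵐ x ∂(volume : Measure (E n)), z x ∈ subdiff σ (gradient ψ x))

/-- Minimal Cahn-Hoffman pair on the torus for the forcing `f`. -/
def IsMinimalTorusCH {n : ℕ} (σ : E n → ℝ) (ψ : E n → ℝ) (f : E n → ℝ)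
    (z : E n → E n) (w : E n → ℝ) : Prop :=
  IsTorusCH σ ψ z w ∧
  ∀ z' w', IsTorusCH σ ψ z' w' →
    (∫ x in cube n, (w x - f x) ^ 2) ≤ ∫ x in cube n, (w' x - f x) ^ 2


section Helpers
variable {α : Type*} [MeasurableSpace α] {μ : Measure α}

lemma int_mul {g h : α → ℝ} (hg : MemLp g 2 μ) (hh : MemLp h 2 μ) :
    Integrable (fun x => g x * h x) μ := by
  have hb : Integrable (fun x => ((g x)^2 + (h x)^2)/2) μ :=
    (hg.integrable_sq.add hh.integrable_sq).div_const 2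
  refine hb.mono (hg.1.mul hh.1) (Filter.Eventually.of_forall fun x => ?_)
  have h0 : (0:ℝ) ≤ ((g x)^2 + (h x)^2)/2 := by positivity
  rw [Real.norm_eq_abs, Real.norm_eq_abs, abs_mul, abs_of_nonneg h0]
  nlinarith [sq_nonneg (|g x| - |h x|), sq_abs (g x), sq_abs (h x)]

lemma expand_sq {g h : α → ℝ} (hg : MemLp g 2 μ) (hh : MemLp h 2 μ) :
    ∫ x, (g x + h x)^2 ∂μ
      = (∫ x, (g x)^2 ∂μ) + 2*(∫ x, g x * h x ∂μ) + ∫ x, (h x)^2 ∂μ := by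
  have h1 : Integrable (fun x => (g x)^2) μ := hg.integrable_sq
  have h2 : Integrable (fun x => g x * h x) μ := int_mul hg hh
  have h3 : Integrable (fun x => (h x)^2) μ := hh.integrable_sq
  calc ∫ x, (g x + h x)^2 ∂μ
      = ∫ x, ((g x)^2 + 2*(g x * h x) + (h x)^2) ∂μ :=
        integral_congr_ae (Filter.Eventually.of_forall fun x => by ring)
    _ = _ := by
        have h2' : Integrable (fun x => 2*(g x * h x)) μ := h2.const_mul 2
        have h12 : Integrable (fun x => (g x)^2 + 2*(g x * h x)) μ := h1.add h2'
        rw [integral_add h12 h3, integral_add h1 h2', integral_const_mul]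

lemma ae_norm_le_of_memtop {F : Type*} [NormedAddCommGroup F] {f : α → F}
    (hf : MemLp f ⊤ μ) : ∃ C : ℝ, 0 ≤ C ∧ ∀ᵐ x ∂μ, ‖f x‖ ≤ C := by
  refine ⟨(eLpNormEssSup f μ).toReal, ENNReal.toReal_nonneg, ?_⟩
  have h2 : eLpNormEssSup f μ ≠ ⊤ := by
    simpa [eLpNorm_exponent_top] using hf.2.ne
  filter_upwards [ae_le_eLpNormEssSup (f := f) (μ := μ)] with x hx
  calc ‖f x‖ = ((‖f x‖₊ : ℝ≥0∞)).toReal := by simp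
    _ ≤ _ := ENNReal.toReal_mono h2 hx

lemma integrable_inner_top {k : ℕ} [IsFiniteMeasure μ] {u v : α → E k}
    (hu : MemLp u ⊤ μ) (hv : MemLp v ⊤ μ) :
    Integrable (fun x => ⟪u x, v x⟫) μ := by
  obtain ⟨C1, hC1, h1⟩ := ae_norm_le_of_memtop hu
  obtain ⟨C2, hC2, h2⟩ := ae_norm_le_of_memtop hv
  refine (integrable_const (C1*C2)).mono (hu.1.inner hv.1) ?_
  filter_upwards [h1, h2] with x hx1 hx2
  have h : ‖⟪u x, v x⟫‖ ≤ C1 * C2 :=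
    (norm_inner_le_norm _ _).trans (mul_le_mul hx1 hx2 (norm_nonneg _) hC1)
  rw [Real.norm_eq_abs (C1*C2), abs_of_nonneg (mul_nonneg hC1 hC2)]
  exact h

lemma cube_measurableSet (n : ℕ) : MeasurableSet (cube n) := by
  have h : cube n = ⋂ i, (fun x : E n => x i) ⁻¹' Set.Ico (0:ℝ) 1 := by
    ext x; simp [cube]
  rw [h]
  exact MeasurableSet.iInter fun i =>
    ((EuclideanSpace.proj (𝕜 := ℝ) i).continuous.measurable) measurableSet_Ico

lemma cube_bounded (n : ℕ) : Bornology.IsBounded (cube n) := by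
  rw [Metric.isBounded_iff_subset_closedBall 0]
  refine ⟨Real.sqrt n, fun x hx => ?_⟩
  rw [Metric.mem_closedBall, dist_zero_right, EuclideanSpace.norm_eq]
  refine Real.sqrt_le_sqrt ?_
  have hb : ∀ i ∈ Finset.univ, ‖x i‖^2 ≤ (1:ℝ) := by
    intro i _
    have h := hx i
    have habs : |x i| ≤ 1 := abs_le.2 ⟨by linarith [h.1], le_of_lt h.2⟩
    calc ‖x i‖^2 = |x i|^2 := by rw [Real.norm_eq_abs]
      _ ≤ 1 := by nlinarith [abs_nonneg (x i)]
  calc ∑ i, ‖x i‖^2 ≤ ∑ _i : Fin n, (1:ℝ) := Finset.sum_le_sum hb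
    _ = n := by simp

lemma cube_finite (n : ℕ) : IsFiniteMeasure ((volume : Measure (E n)).restrict (cube n)) := by
  constructor
  rw [Measure.restrict_apply_univ]
  exact (cube_bounded n).measure_lt_top


lemma periodic_null {n : ℕ} {g g' : E n → ℝ}
    (hg : ∀ (x : E n) (k : Fin n → ℤ),
      g (x + (WithLp.equiv 2 (Fin n → ℝ)).symm fun i => (k i : ℝ)) = g x)
    (hg' : ∀ (x : E n) (k : Fin n → ℤ),
      g' (x + (WithLp.equiv 2 (Fin n → ℝ)).symm fun i => (k i : ℝ)) = g' x)
    (h0 : (volume : Measure (E n)) ({x | g x ≠ g' x} ∩ cube n) = 0) :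
    ∀ᵐ x ∂(volume : Measure (E n)), g x = g' x := by
  rw [ae_iff]
  have hsub : {x | ¬ g x = g' x} ⊆ ⋃ k : Fin n → ℤ,
      (fun x : E n => x + (WithLp.equiv 2 (Fin n → ℝ)).symm fun i => (k i : ℝ)) ⁻¹'
        ({x | g x ≠ g' x} ∩ cube n) := by
    intro x hx
    refine Set.mem_iUnion.2 ⟨fun i => -⌊x i⌋, ?_, ?_⟩
    · show ¬ g _ = g' _
      rw [hg x _, hg' x _]
      exact hx
    · intro i
      show (x + (WithLp.equiv 2 (Fin n → ℝ)).symm fun j => ((-⌊x j⌋ : ℤ) : ℝ)) i ∈ Set.Ico (0:ℝ) 1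
      have h1 := Int.floor_le (x i)
      have h2 := Int.lt_floor_add_one (x i)
      have hc : (x + (WithLp.equiv 2 (Fin n → ℝ)).symm fun j => ((-⌊x j⌋ : ℤ) : ℝ)) i
          = x i + ((-⌊x i⌋ : ℤ) : ℝ) := by
        simp [PiLp.add_apply, PiLp.toLp_apply]
      rw [hc]
      push_cast
      constructor
      · linarith
      · linarith
  refine measure_mono_null hsub (measure_iUnion_null fun k => ?_)
  have he : (fun x : E n => x + (WithLp.equiv 2 (Fin n → ℝ)).symm fun i => (k i : ℝ))
      = fun x : E n => ((WithLp.equiv 2 (Fin n → ℝ)).symm fun i => (k i : ℝ)) + x := by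
    funext x; rw [add_comm]
  rw [he, measure_preimage_add]
  exact h0

end Helpers

/-- Lemma 2.2 of the paper: dependence of the minimal divergence on
constant shifts of the forcing.  Here `(z, w)` is a minimal Cahn-Hoffman pair for `f`
and `(z', w')` one for `f + c`, so that `Λ_f[ψ] = w - f` and `Λ_{f+c}[ψ] = w' - (f + c)`
on `{ψ = 0}`. -/

theorem minimal_divergence_constant_shift
    {n : ℕ} (hn : 1 ≤ n) (σ : E n → ℝ) (hσ : IsAnisotropy σ)
    (ψ : E n → ℝ) (hψper : ZPeriodic ψ) (hψlip : ∃ C : ℝ≥0, LipschitzWith C ψ)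
    (f : E n → ℝ) (hfper : ZPeriodic f) (hfL2 : MemLp f 2 (volume.restrict (cube n)))
    (c : ℝ)
    (z : E n → E n) (w : E n → ℝ) (z' : E n → E n) (w' : E n → ℝ)
    (hmin : IsMinimalTorusCH σ ψ f z w)
    (hmin' : IsMinimalTorusCH σ ψ (fun x => f x + c) z' w') :
    ∀ᵐ x ∂(volume : Measure (E n)),
      ψ x = 0 → w' x - (f x + c) = (w x - f x) - c := by
  obtain ⟨⟨hzper, hwper, hzL, hwL, hdiv, hsub⟩, hminle⟩ := hmin
  obtain ⟨⟨hz'per, hw'per, hz'L, hw'L, hdiv', hsub'⟩, hminle'⟩ := hmin'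
  haveI : IsFiniteMeasure ((volume : Measure (E n)).restrict (cube n)) := cube_finite n
  -- the divergences have zero mean
  have honeper : ZPeriodic (fun _ : E n => (1:ℝ)) := fun x k => rfl
  have hmean : ∫ x in cube n, w x = 0 := by
    have h := hdiv _ contDiff_const honeper
    simpa [gradient_const] using h
  have hmean' : ∫ x in cube n, w' x = 0 := by
    have h := hdiv' _ contDiff_const honeper
    simpa [gradient_const] using h
  -- the midpoint pair is a Cahn-Hoffman pair
  have hCHmid : IsTorusCH σ ψ (fun x => (2:ℝ)⁻¹ • (z x + z' x))
      (fun x => (w x + w' x)/2) := by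
    refine ⟨?_, ?_, ?_, ?_, ?_, ?_⟩
    · intro x k; simp only; rw [hzper x k, hz'per x k]
    · intro x k; simp only; rw [hwper x k, hw'per x k]
    · exact (hzL.add hz'L).const_smul (2:ℝ)⁻¹
    · have h : (fun x => (w x + w' x)/2) = (2:ℝ)⁻¹ • (fun x => w x + w' x) := by
        funext x; simp only [Pi.smul_apply, smul_eq_mul]; ring
      rw [h]; exact (hwL.add hw'L).const_smul _
    · intro φ hφ hφper
      have hgc : Continuous (gradient φ) := by
        unfold gradient
        exact (InnerProductSpace.toDual ℝ (E n)).symm.continuous.comp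
          (hφ.continuous_fderiv one_ne_zero)
      have hK : IsCompact (closure (cube n)) :=
        Metric.isCompact_of_isClosed_isBounded isClosed_closure (cube_bounded n).closure
      have hφtop : MemLp φ ⊤ (volume.restrict (cube n)) := by
        obtain ⟨C, hC⟩ := hK.exists_bound_of_continuousOn hφ.continuous.continuousOn
        exact memLp_top_of_bound hφ.continuous.aestronglyMeasurable C
          ((ae_restrict_iff' (cube_measurableSet n)).2 (Filter.Eventually.of_forall
            fun x hx => hC x (subset_closure hx)))
      have hgtop : MemLp (gradient φ) ⊤ (volume.restrict (cube n)) := by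
        obtain ⟨C, hC⟩ := hK.exists_bound_of_continuousOn hgc.continuousOn
        exact memLp_top_of_bound hgc.aestronglyMeasurable C
          ((ae_restrict_iff' (cube_measurableSet n)).2 (Filter.Eventually.of_forall
            fun x hx => hC x (subset_closure hx)))
      have hφ2 : MemLp φ 2 (volume.restrict (cube n)) := hφtop.mono_exponent le_top
      have hiw : Integrable (fun x => w x * φ x) (volume.restrict (cube n)) :=
        int_mul hwL hφ2
      have hiw' : Integrable (fun x => w' x * φ x) (volume.restrict (cube n)) :=
        int_mul hw'L hφ2
      have hiz : Integrable (fun x => ⟪z x, gradient φ x⟫) (volume.restrict (cube n)) :=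
        integrable_inner_top hzL hgtop
      have hiz' : Integrable (fun x => ⟪z' x, gradient φ x⟫) (volume.restrict (cube n)) :=
        integrable_inner_top hz'L hgtop
      have e1 : ∫ x in cube n, ((w x + w' x)/2) * φ x
          = ((∫ x in cube n, w x * φ x) + ∫ x in cube n, w' x * φ x)/2 := by
        rw [← integral_add hiw hiw', ← integral_div]
        exact integral_congr_ae (Filter.Eventually.of_forall fun x => by ring)
      have e2 : ∫ x in cube n, ⟪(2:ℝ)⁻¹ • (z x + z' x), gradient φ x⟫
          = ((∫ x in cube n, ⟪z x, gradient φ x⟫)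
              + ∫ x in cube n, ⟪z' x, gradient φ x⟫)/2 := by
        rw [← integral_add hiz hiz', ← integral_div]
        refine integral_congr_ae (Filter.Eventually.of_forall fun x => ?_)
        show ⟪(2:ℝ)⁻¹ • (z x + z' x), gradient φ x⟫
            = (⟪z x, gradient φ x⟫ + ⟪z' x, gradient φ x⟫)/2
        rw [real_inner_smul_left, inner_add_left]
        ring
      show ∫ x in cube n, ((w x + w' x)/2) * φ x
          = - ∫ x in cube n, ⟪(2:ℝ)⁻¹ • (z x + z' x), gradient φ x⟫
      rw [e1, e2, hdiv φ hφ hφper, hdiv' φ hφ hφper]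
      ring
    · filter_upwards [hsub, hsub'] with x h1 h2
      intro q
      have e : ⟪(2:ℝ)⁻¹ • (z x + z' x), q - gradient ψ x⟫
          = 2⁻¹ * (⟪z x, q - gradient ψ x⟫ + ⟪z' x, q - gradient ψ x⟫) := by
        rw [real_inner_smul_left, inner_add_left]
      have h1q := h1 q
      have h2q := h2 q
      show σ (gradient ψ x) + ⟪(2:ℝ)⁻¹ • (z x + z' x), q - gradient ψ x⟫ ≤ σ q
      rw [e]
      linarith
  -- integrability and L² facts
  have ha : MemLp (fun x => w x - f x) 2 (volume.restrict (cube n)) := hwL.sub hfL2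
  have hb : MemLp (fun x => w' x - f x) 2 (volume.restrict (cube n)) := hw'L.sub hfL2
  have hia : Integrable (fun x => w x - f x) (volume.restrict (cube n)) :=
    ha.integrable one_le_two
  have hib : Integrable (fun x => w' x - f x) (volume.restrict (cube n)) :=
    hb.integrable one_le_two
  have hif : Integrable f (volume.restrict (cube n)) := hfL2.integrable one_le_two
  have hiw0 : Integrable w (volume.restrict (cube n)) := hwL.integrable one_le_two
  have hiw0' : Integrable w' (volume.restrict (cube n)) := hw'L.integrable one_le_two
  have hST : (∫ x in cube n, (w x - f x)) = ∫ x in cube n, (w' x - f x) := by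
    rw [integral_sub hiw0 hif, integral_sub hiw0' hif, hmean, hmean']
  -- expansions
  have egsq : ∫ x in cube n, ((w x + w' x)/2 - f x)^2
      = ((∫ x in cube n, (w x - f x)^2)
          + 2*(∫ x in cube n, (w x - f x) * (w' x - f x))
          + ∫ x in cube n, (w' x - f x)^2)/4 := by
    have h := expand_sq ha hb
    calc ∫ x in cube n, ((w x + w' x)/2 - f x)^2
        = ∫ x in cube n, ((w x - f x) + (w' x - f x))^2 / 4 :=
          integral_congr_ae (Filter.Eventually.of_forall fun x => by ring)
      _ = (∫ x in cube n, ((w x - f x) + (w' x - f x))^2)/4 := integral_div 4 _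
      _ = _ := by rw [h]
  have eg1 : ∫ x in cube n, ((w x + w' x)/2 - f x)
      = ((∫ x in cube n, (w x - f x)) + ∫ x in cube n, (w' x - f x))/2 := by
    rw [← integral_add hia hib, ← integral_div]
    exact integral_congr_ae (Filter.Eventually.of_forall fun x => by ring)
  have hmid : MemLp (fun x => (w x + w' x)/2 - f x) 2 (volume.restrict (cube n)) := by
    have h := (ha.add hb).const_smul (2⁻¹ : ℝ)
    have e : (2⁻¹ : ℝ) • ((fun x => w x - f x) + (fun x => w' x - f x))
        = fun x => (w x + w' x)/2 - f x := by
      funext x; simp only [Pi.smul_apply, Pi.add_apply, smul_eq_mul]; ring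
    rwa [e] at h
  have ebc : ∫ x in cube n, (w' x - (f x + c))^2
      = (∫ x in cube n, (w' x - f x)^2)
          + 2*((∫ x in cube n, (w' x - f x)) * (-c))
          + ((volume : Measure (E n)).restrict (cube n) Set.univ).toReal * c^2 := by
    have h := expand_sq hb (memLp_const (μ := (volume : Measure (E n)).restrict (cube n)) (-c))
    have hl : ∫ x in cube n, (w' x - (f x + c))^2
        = ∫ x in cube n, ((w' x - f x) + (-c))^2 :=
      integral_congr_ae (Filter.Eventually.of_forall fun x => by ring)
    rw [hl, h, integral_mul_const, integral_const, smul_eq_mul, measureReal_def]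
    ring
  have emidc : ∫ x in cube n, ((w x + w' x)/2 - (f x + c))^2
      = (∫ x in cube n, ((w x + w' x)/2 - f x)^2)
          + 2*((∫ x in cube n, ((w x + w' x)/2 - f x)) * (-c))
          + ((volume : Measure (E n)).restrict (cube n) Set.univ).toReal * c^2 := by
    have h := expand_sq hmid (memLp_const (μ := (volume : Measure (E n)).restrict (cube n)) (-c))
    have hl : ∫ x in cube n, ((w x + w' x)/2 - (f x + c))^2
        = ∫ x in cube n, (((w x + w' x)/2 - f x) + (-c))^2 :=
      integral_congr_ae (Filter.Eventually.of_forall fun x => by ring)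
    rw [hl, h, integral_mul_const, integral_const, smul_eq_mul, measureReal_def]
    ring
  have eab : ∫ x in cube n, (w x - w' x)^2
      = (∫ x in cube n, (w x - f x)^2)
          - 2*(∫ x in cube n, (w x - f x) * (w' x - f x))
          + ∫ x in cube n, (w' x - f x)^2 := by
    have h1 : Integrable (fun x => (w x - f x)^2) (volume.restrict (cube n)) :=
      ha.integrable_sq
    have h2 : Integrable (fun x => (w x - f x) * (w' x - f x)) (volume.restrict (cube n)) :=
      int_mul ha hb
    have h3 : Integrable (fun x => (w' x - f x)^2) (volume.restrict (cube n)) :=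
      hb.integrable_sq
    have h2' : Integrable (fun x => 2*((w x - f x) * (w' x - f x)))
        (volume.restrict (cube n)) := h2.const_mul 2
    have h12 : Integrable (fun x => (w x - f x)^2 - 2*((w x - f x) * (w' x - f x)))
        (volume.restrict (cube n)) := h1.sub h2'
    calc ∫ x in cube n, (w x - w' x)^2
        = ∫ x in cube n, ((w x - f x)^2 - 2*((w x - f x) * (w' x - f x))
            + (w' x - f x)^2) :=
          integral_congr_ae (Filter.Eventually.of_forall fun x => by ring)
      _ = _ := by rw [integral_add h12 h3, integral_sub h1 h2', integral_const_mul]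
  -- the two minimality inequalities
  have k1 : (∫ x in cube n, (w x - f x)^2)
      ≤ ((∫ x in cube n, (w x - f x)^2)
          + 2*(∫ x in cube n, (w x - f x) * (w' x - f x))
          + ∫ x in cube n, (w' x - f x)^2)/4 := by
    have h := hminle _ _ hCHmid
    rwa [egsq] at h
  have k2 : (∫ x in cube n, (w' x - f x)^2)
      ≤ ((∫ x in cube n, (w x - f x)^2)
          + 2*(∫ x in cube n, (w x - f x) * (w' x - f x))
          + ∫ x in cube n, (w' x - f x)^2)/4 := by
    have h := hminle' _ _ hCHmid
    simp only at h
    rw [ebc, emidc, eg1, hST] at h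
    linarith
  have kfin : ∫ x in cube n, (w x - w' x)^2 ≤ 0 := by
    rw [eab]; linarith
  have hzero : ∫ x in cube n, (w x - w' x)^2 = 0 :=
    le_antisymm kfin (integral_nonneg fun x => sq_nonneg _)
  have hint : Integrable (fun x => (w x - w' x)^2) (volume.restrict (cube n)) :=
    (hwL.sub hw'L).integrable_sq
  have haeq : ∀ᵐ x ∂((volume : Measure (E n)).restrict (cube n)), w x = w' x := by
    have h := (integral_eq_zero_iff_of_nonneg (fun x => sq_nonneg _) hint).1 hzero
    filter_upwards [h] with x hx
    have hx' : (w x - w' x)^2 = 0 := hx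
    have := pow_eq_zero_iff (n := 2) (by norm_num) |>.1 hx'
    linarith
  have h0 : (volume : Measure (E n)) ({x | w x ≠ w' x} ∩ cube n) = 0 := by
    have h := ae_iff.mp haeq
    rwa [Measure.restrict_apply' (cube_measurableSet n)] at h
  have hfinal : ∀ᵐ x ∂(volume : Measure (E n)), w x = w' x :=
    periodic_null hwper hw'per h0
  filter_upwards [hfinal] with x hx _
  rw [hx]
  ring

end Paper
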